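/- Let A, B : ℝ → ℝ be twice differentiable functions with A''(λ) > 0 and B''(λ) > 0 for all λ, and let g, h > 0 be constants. Define D(λ) = ½[A(λ) + B(λ) + √((A(λ)-B(λ))² + 4gh)]. Then D''(λ) > 0 for all λ ∈ ℝ; in fact D''(λ) ≥ min{A''(λ), B''(λ)}. -/

import Mathlib

open Real

lemma key_ineq (c P Q u v S : ℝ) (hc : 0 < c) (hP : 0 < P) (hQ : 0 < Q)
    (hS : 0 < S) (hS2 : S ^ 2 = u ^ 2 + c) :
    min P Q ≤ (P + Q + ((v * v + u * (P - Q)) * S - (u * v) * (u * v / S)) / S ^ 2) / 2 := by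
  have hS3 : 0 < S ^ 3 := by positivity
  have hE : (P + Q + ((v * v + u * (P - Q)) * S - (u * v) * (u * v / S)) / S ^ 2) / 2
      = (P + Q + (v ^ 2 * c + u * (P - Q) * S ^ 2) / S ^ 3) / 2 := by
    have hc' : c = S ^ 2 - u ^ 2 := by linarith
    subst hc'
    field_simp
    ring
  rw [hE]
  have huS : u ^ 2 < S ^ 2 := by nlinarith
  have h1 : u < S := by nlinarith
  have h2 : -S < u := by nlinarith
  rcases le_total P Q with hpq | hpq
  · rw [min_eq_left hpq, le_div_iff₀ (by norm_num : (0:ℝ) < 2)]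
    have hN : (P - Q) ≤ (v ^ 2 * c + u * (P - Q) * S ^ 2) / S ^ 3 := by
      rw [le_div_iff₀ hS3]
      nlinarith [mul_nonneg (mul_nonneg (sub_nonneg.mpr hpq) (sub_pos.mpr h1).le) (sq_nonneg S),
        mul_nonneg (sq_nonneg v) hc.le]
    linarith
  · rw [min_eq_right hpq, le_div_iff₀ (by norm_num : (0:ℝ) < 2)]
    have hN : (Q - P) ≤ (v ^ 2 * c + u * (P - Q) * S ^ 2) / S ^ 3 := by
      rw [le_div_iff₀ hS3]
      nlinarith [mul_nonneg (mul_nonneg (sub_nonneg.mpr hpq) (by linarith : (0:ℝ) ≤ S + u)) (sq_nonneg S),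
        mul_nonneg (sq_nonneg v) hc.le]
    linarith

theorem stmt8 (A B : ℝ → ℝ) (g h : ℝ) (hg : 0 < g) (hh : 0 < h)
    (hA1 : Differentiable ℝ A) (hA2 : Differentiable ℝ (deriv A))
    (hB1 : Differentiable ℝ B) (hB2 : Differentiable ℝ (deriv B))
    (hA'' : ∀ lam, 0 < deriv (deriv A) lam)
    (hB'' : ∀ lam, 0 < deriv (deriv B) lam)
    (D : ℝ → ℝ)
    (hD : ∀ lam, D lam =
      (A lam + B lam + Real.sqrt ((A lam - B lam) ^ 2 + 4 * g * h)) / 2) :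
    ∀ lam : ℝ,
      min (deriv (deriv A) lam) (deriv (deriv B) lam) ≤ deriv (deriv D) lam ∧
      0 < deriv (deriv D) lam := by
  have hc0 : (0:ℝ) < 4 * g * h := by positivity
  have hs0 : ∀ x : ℝ, 0 < (A x - B x) ^ 2 + 4 * g * h := fun x => by positivity
  have hSpos : ∀ x : ℝ, 0 < Real.sqrt ((A x - B x) ^ 2 + 4 * g * h) :=
    fun x => Real.sqrt_pos.mpr (hs0 x)
  have hDeq : D = fun x => (A x + B x + Real.sqrt ((A x - B x) ^ 2 + 4 * g * h)) / 2 :=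
    funext hD
  have hsq : ∀ x : ℝ, HasDerivAt (fun y => Real.sqrt ((A y - B y) ^ 2 + 4 * g * h))
      ((A x - B x) * (deriv A x - deriv B x) / Real.sqrt ((A x - B x) ^ 2 + 4 * g * h)) x := by
    intro x
    have hinner : HasDerivAt (fun y => (A y - B y) ^ 2 + 4 * g * h)
        (2 * (A x - B x) * (deriv A x - deriv B x)) x := by
      have := (((hA1 x).hasDerivAt.sub (hB1 x).hasDerivAt).pow 2).add_const (4 * g * h)
      refine this.congr_deriv ?_
      norm_num
    have := hinner.sqrt (hs0 x).ne'
    convert this using 1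
    have hS := (hSpos x).ne'
    field_simp
  have hD1 : ∀ x : ℝ, HasDerivAt D
      ((deriv A x + deriv B x +
        (A x - B x) * (deriv A x - deriv B x) / Real.sqrt ((A x - B x) ^ 2 + 4 * g * h)) / 2) x := by
    intro x
    rw [hDeq]
    exact (((hA1 x).hasDerivAt.add (hB1 x).hasDerivAt).add (hsq x)).div_const 2
  have hderivD : deriv D = fun x =>
      (deriv A x + deriv B x +
        (A x - B x) * (deriv A x - deriv B x) / Real.sqrt ((A x - B x) ^ 2 + 4 * g * h)) / 2 :=
    funext fun x => (hD1 x).deriv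
  intro lam
  set P := deriv (deriv A) lam with hPdef
  set Q := deriv (deriv B) lam with hQdef
  set u := A lam - B lam with hudef
  set v := deriv A lam - deriv B lam with hvdef
  set S := Real.sqrt ((A lam - B lam) ^ 2 + 4 * g * h) with hSdef
  have hNum : HasDerivAt (fun y => (A y - B y) * (deriv A y - deriv B y))
      (v * v + u * (P - Q)) lam := by
    have := ((hA1 lam).hasDerivAt.sub (hB1 lam).hasDerivAt).mul
      ((hA2 lam).hasDerivAt.sub (hB2 lam).hasDerivAt)
    exact this
  have hquot : HasDerivAt
      (fun y => (A y - B y) * (deriv A y - deriv B y) / Real.sqrt ((A y - B y) ^ 2 + 4 * g * h))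
      (((v * v + u * (P - Q)) * S - (u * v) * (u * v / S)) / S ^ 2) lam := by
    exact hNum.div (hsq lam) (hSpos lam).ne'
  have hfull : HasDerivAt (deriv D)
      ((P + Q + ((v * v + u * (P - Q)) * S - (u * v) * (u * v / S)) / S ^ 2) / 2) lam := by
    rw [hderivD]
    exact (((hA2 lam).hasDerivAt.add (hB2 lam).hasDerivAt).add hquot).div_const 2
  have hD2 : deriv (deriv D) lam
      = (P + Q + ((v * v + u * (P - Q)) * S - (u * v) * (u * v / S)) / S ^ 2) / 2 :=
    hfull.deriv
  have hS2 : S ^ 2 = u ^ 2 + 4 * g * h := Real.sq_sqrt (hs0 lam).le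
  have hmin : min P Q ≤ deriv (deriv D) lam := by
    rw [hD2]
    exact key_ineq (4 * g * h) P Q u v S hc0 (hA'' lam) (hB'' lam) (hSpos lam) hS2
  exact ⟨hmin, lt_of_lt_of_le (lt_min (hA'' lam) (hB'' lam)) hmin⟩
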